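/- For any vectors u, v in R^d, ‖softmax(u) − softmax(v)‖_∞ ≤ exp(2‖u − v‖_∞) − 1, where softmax(u)_i = exp(u_i)/Σ_j exp(u_j). -/

import Mathlib

open Real Finset

lemma softmax_one_side {d : ℕ} (u v : Fin d → ℝ) (i : Fin d) :
    Real.exp (u i) / ∑ j, Real.exp (u j) - Real.exp (v i) / ∑ j, Real.exp (v j) ≤
      Real.exp (2 * ‖u - v‖) - 1 := by
  set M := ‖u - v‖ with hM
  have hM0 : 0 ≤ M := norm_nonneg _
  have hb : ∀ j, u j ≤ v j + M ∧ v j ≤ u j + M := by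
    intro j
    have := norm_le_pi_norm (u - v) j
    simp only [Pi.sub_apply, Real.norm_eq_abs] at this
    constructor <;> [skip; skip] <;> cases abs_le.mp this <;> linarith
  have hSu : (0:ℝ) < ∑ j, Real.exp (u j) :=
    Finset.sum_pos (fun j _ => Real.exp_pos _) ⟨i, Finset.mem_univ i⟩
  have hSv : (0:ℝ) < ∑ j, Real.exp (v j) :=
    Finset.sum_pos (fun j _ => Real.exp_pos _) ⟨i, Finset.mem_univ i⟩
  have hsum : (∑ j, Real.exp (v j)) ≤ Real.exp M * ∑ j, Real.exp (u j) := by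
    rw [Finset.mul_sum]
    apply Finset.sum_le_sum
    intro j _
    rw [← Real.exp_add]
    exact Real.exp_le_exp.mpr (by linarith [(hb j).2])
  have hcoord : Real.exp (u i) ≤ Real.exp M * Real.exp (v i) := by
    rw [← Real.exp_add]
    exact Real.exp_le_exp.mpr (by linarith [(hb i).1])
  have key : Real.exp (u i) / ∑ j, Real.exp (u j) ≤
      Real.exp (2 * M) * (Real.exp (v i) / ∑ j, Real.exp (v j)) := by
    rw [div_le_iff₀ hSu]
    have h1 : Real.exp (u i) * ∑ j, Real.exp (v j) ≤
        (Real.exp M * Real.exp (v i)) * (Real.exp M * ∑ j, Real.exp (u j)) := by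
      apply mul_le_mul hcoord hsum (le_of_lt hSv)
      positivity
    calc Real.exp (u i)
        = Real.exp (u i) * (∑ j, Real.exp (v j)) / ∑ j, Real.exp (v j) := by
          field_simp
      _ ≤ (Real.exp M * Real.exp (v i)) * (Real.exp M * ∑ j, Real.exp (u j)) /
            ∑ j, Real.exp (v j) := by
          gcongr
      _ = Real.exp (2 * M) * (Real.exp (v i) / ∑ j, Real.exp (v j)) *
            ∑ j, Real.exp (u j) := by
          rw [two_mul, Real.exp_add]; field_simp
  have ht1 : Real.exp (v i) / ∑ j, Real.exp (v j) ≤ 1 := by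
    rw [div_le_one hSv]
    exact Finset.single_le_sum (f := fun j => Real.exp (v j))
      (fun j _ => (Real.exp_pos _).le) (Finset.mem_univ i)
  have ht0 : 0 ≤ Real.exp (v i) / ∑ j, Real.exp (v j) := by positivity
  have he : (1:ℝ) ≤ Real.exp (2 * M) := by
    rw [Real.one_le_exp_iff]; linarith
  nlinarith

/-- `‖softmax u − softmax v‖_∞ ≤ exp (2 ‖u − v‖_∞) − 1`, where `Fin d → ℝ`
carries the sup norm and `softmax u i = exp (u i) / ∑ j, exp (u j)`. -/
theorem softmax_perturbation {d : ℕ} (u v : Fin d → ℝ) :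
    ‖(fun i => Real.exp (u i) / ∑ j, Real.exp (u j)) -
      (fun i => Real.exp (v i) / ∑ j, Real.exp (v j))‖ ≤
      Real.exp (2 * ‖u - v‖) - 1 := by
  have hr : (0:ℝ) ≤ Real.exp (2 * ‖u - v‖) - 1 := by
    have : (1:ℝ) ≤ Real.exp (2 * ‖u - v‖) := by
      rw [Real.one_le_exp_iff]; positivity
    linarith
  rw [pi_norm_le_iff_of_nonneg hr]
  intro i
  simp only [Pi.sub_apply, Real.norm_eq_abs]
  rw [abs_sub_le_iff]
  constructor
  · exact softmax_one_side u v i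
  · have := softmax_one_side v u i
    rwa [norm_sub_rev] at this
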